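/- With lines L_1: x=0, L_2: x=1, L_3: x=t, K_1: y=0, K_2: y=1, K_3: y=t in ℂ², the three points Q_{12} = (0,1), Q_{23} = (1,t), Q_{31} = (t,0) are collinear if and only if t² − t + 1 = 0. -/

import Mathlib

/-- The points `Q₁₂ = (0,1)`, `Q₂₃ = (1,t)`, `Q₃₁ = (t,0)` are collinear iff
`t² - t + 1 = 0`. -/
theorem case6_collinear_iff (t : ℂ) :
    (Matrix.det !![0, 1, 1; 1, t, 1; t, 0, 1]) = 0 ↔ t ^ 2 - t + 1 = 0 := by
  rw [Matrix.det_fin_three]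
  norm_num [Matrix.cons_val_zero, Matrix.cons_val_one, Matrix.cons_val_two, Matrix.cons_val_fin_one, Matrix.head_cons, Matrix.head_fin_const, Matrix.vecHead, Matrix.vecTail]
  constructor <;> intro h <;> linear_combination -h
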